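/- Let N be a positive integer. Then for every integer n: Σ_k^n sin(π/(2N)) · |sin((2k−1)π/(2N))| = ⌊n/N⌋ + (1/2) · ( 1 − (−1)^{⌊n/N⌋} · cos(nπ/N) ), where the left-hand side is the bidirectional sum and ⌊·⌋ is the floor function. -/

import Mathlib

/-- Bidirectional sum: `Σ_k^n x_k = Σ_{k=1}^n x_k` for `n ≥ 1`, `0` for `n = 0`, and
`−Σ_{k=n+1}^0 x_k` for `n ≤ −1`. -/
noncomputable def bsum (x : ℤ → ℝ) (n : ℤ) : ℝ :=
  if 1 ≤ n then ∑ k ∈ Finset.Icc (1:ℤ) n, x k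
  else if n = 0 then 0
  else -∑ k ∈ Finset.Icc (n+1) (0:ℤ), x k

noncomputable def FF (N : ℕ) (n : ℤ) : ℝ :=
  (Int.fdiv n N : ℝ) + (1 / 2) * (1 - (-1 : ℝ) ^ (Int.fdiv n N) * Real.cos (n * Real.pi / N))

lemma key (N : ℕ) (hN : 0 < N) (n : ℤ) :
    Real.sin (Real.pi / (2 * N)) * |Real.sin ((2 * (n:ℝ) - 1) * Real.pi / (2 * N))|
      = FF N n - FF N (n - 1) := by
  set m : ℤ := (n - 1).fdiv N with hm
  set s : ℤ := (n - 1).fmod N with hs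
  have hNZ : (N : ℤ) ≠ 0 := by positivity
  have hNP : (0:ℤ) < N := by exact_mod_cast hN
  have hdm : (N : ℤ) * m + s = n - 1 := Int.mul_fdiv_add_fmod _ _
  have hs0 : 0 ≤ s := Int.fmod_nonneg_of_pos _ hNP
  have hsN : s < N := Int.fmod_lt_of_pos _ hNP
  have hNR : (N : ℝ) ≠ 0 := by positivity
  -- real decomposition of n
  have hnr : (n : ℝ) = N * m + s + 1 := by
    have := congrArg (fun z : ℤ => (z : ℝ)) hdm
    push_cast at this
    linarith
  -- angle rewrites
  have hang : (2 * (n:ℝ) - 1) * Real.pi / (2 * N)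
      = (2 * s + 1) * Real.pi / (2 * N) + m * Real.pi := by
    rw [hnr]; field_simp; ring
  have hpos : 0 < (2 * (s:ℝ) + 1) * Real.pi / (2 * N) := by
    have : (0:ℝ) ≤ s := by exact_mod_cast hs0
    apply div_pos (by nlinarith [Real.pi_pos]) (by positivity)
  have hlt : (2 * (s:ℝ) + 1) * Real.pi / (2 * N) < Real.pi := by
    rw [div_lt_iff₀ (by positivity)]
    have : (s:ℝ) ≤ (N:ℝ) - 1 := by exact_mod_cast (by omega : s ≤ (N:ℤ) - 1)
    nlinarith [Real.pi_pos]
  have habs : |Real.sin ((2 * (n:ℝ) - 1) * Real.pi / (2 * N))|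
      = Real.sin ((2 * (s:ℝ) + 1) * Real.pi / (2 * N)) := by
    have habs1 : |(-1:ℝ)^m| = 1 := by
      rcases Int.even_or_odd m with h | h
      · rw [h.neg_one_zpow]; norm_num
      · rw [Odd.neg_one_zpow h]; norm_num
    rw [hang, Real.sin_add_int_mul_pi, abs_mul, habs1, one_mul,
      abs_of_pos (Real.sin_pos_of_pos_of_lt_pi hpos hlt)]
  -- product to difference of cosines
  have hprod : Real.sin (Real.pi / (2 * N)) * Real.sin ((2 * (s:ℝ) + 1) * Real.pi / (2 * N))
      = (1/2) * (Real.cos ((s:ℝ) * Real.pi / N) - Real.cos (((s:ℝ) + 1) * Real.pi / N)) := by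
    have h := Real.cos_sub_cos ((s:ℝ) * Real.pi / N) (((s:ℝ) + 1) * Real.pi / N)
    have e1 : ((s:ℝ) * Real.pi / N + ((s:ℝ) + 1) * Real.pi / N) / 2
        = (2 * (s:ℝ) + 1) * Real.pi / (2 * N) := by field_simp; ring
    have e2 : ((s:ℝ) * Real.pi / N - ((s:ℝ) + 1) * Real.pi / N) / 2
        = -(Real.pi / (2 * N)) := by field_simp; ring
    rw [e1, e2, Real.sin_neg] at h
    linarith
  have hq : (n - 1).fdiv N = m := rfl
  have hcos1 : Real.cos (((n:ℝ) - 1) * Real.pi / N)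
      = (-1:ℝ)^m * Real.cos ((s:ℝ) * Real.pi / N) := by
    have e : ((n:ℝ) - 1) * Real.pi / N = (s:ℝ) * Real.pi / N + m * Real.pi := by
      rw [hnr]; field_simp; ring
    rw [e, Real.cos_add_int_mul_pi]
  have hsq : (-1:ℝ)^m * (-1:ℝ)^m = 1 := by
    rw [← mul_zpow]; norm_num
  rw [habs, hprod]
  rcases eq_or_lt_of_le (by omega : s + 1 ≤ (N:ℤ)) with hE | hL
  · -- s + 1 = N : crossing a multiple of N
    have hq' : n.fdiv N = m + 1 := by
      have hn : n = (N:ℤ) * (m + 1) := by rw [mul_add, mul_one]; omega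
      rw [hn, Int.mul_fdiv_cancel_left _ hNZ]
    have hcos2 : Real.cos ((n:ℝ) * Real.pi / N) = (-1:ℝ)^(m+1) := by
      have hsr : (s:ℝ) = (N:ℝ) - 1 := by exact_mod_cast (by omega : s = (N:ℤ) - 1)
      have e : (n:ℝ) * Real.pi / N = 0 + (m + 1 : ℤ) * Real.pi := by
        rw [hnr, hsr]; push_cast; field_simp; ring
      rw [e, Real.cos_add_int_mul_pi, Real.cos_zero, mul_one]
    have hcosπ : Real.cos (((s:ℝ) + 1) * Real.pi / N) = -1 := by
      have hsr : (s:ℝ) = (N:ℝ) - 1 := by exact_mod_cast (by omega : s = (N:ℤ) - 1)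
      rw [hsr]
      have : ((N:ℝ) - 1 + 1) * Real.pi / N = Real.pi := by field_simp; ring
      rw [this, Real.cos_pi]
    have hc1 : Real.cos (((n:ℝ) - 1) * Real.pi / N) = Real.cos (((n - 1 : ℤ):ℝ) * Real.pi / N) := by
      push_cast; ring_nf
    unfold FF
    rw [hq', hq, hcos2, ← hc1, hcos1, hcosπ]
    push_cast
    rw [zpow_add₀ (by norm_num : (-1:ℝ) ≠ 0) m 1, zpow_one]
    linear_combination ((1 - Real.cos ((s:ℝ) * Real.pi / N)) / 2) * hsq
  · -- s + 1 < N : same block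
    have hq' : n.fdiv N = m := by
      have hn : n = (s + 1) + (N:ℤ) * m := by omega
      rw [Int.fdiv_eq_ediv_of_nonneg _ (le_of_lt hNP), hn, Int.add_mul_ediv_left _ _ hNZ,
        Int.ediv_eq_zero_of_lt (by omega) hL, zero_add]
    have hcos2 : Real.cos ((n:ℝ) * Real.pi / N)
        = (-1:ℝ)^m * Real.cos (((s:ℝ) + 1) * Real.pi / N) := by
      have e : (n:ℝ) * Real.pi / N = ((s:ℝ) + 1) * Real.pi / N + m * Real.pi := by
        rw [hnr]; field_simp; ring
      rw [e, Real.cos_add_int_mul_pi]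
    have hc1 : Real.cos (((n:ℝ) - 1) * Real.pi / N) = Real.cos (((n - 1 : ℤ):ℝ) * Real.pi / N) := by
      push_cast; ring_nf
    unfold FF
    rw [hq', hq, hcos2, ← hc1, hcos1]
    push_cast
    linear_combination ((Real.cos (((s:ℝ) + 1) * Real.pi / N) - Real.cos ((s:ℝ) * Real.pi / N)) / 2) * hsq

lemma bsum_succ (x : ℤ → ℝ) (n : ℤ) : bsum x (n + 1) = bsum x n + x (n + 1) := by
  unfold bsum
  rcases lt_trichotomy n 0 with h | h | h
  · rcases eq_or_lt_of_le (by omega : n + 1 ≤ 0) with h1 | h1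
    · simp only [if_neg (by omega : ¬ (1:ℤ) ≤ n + 1), if_pos h1,
        if_neg (by omega : ¬ (1:ℤ) ≤ n), if_neg (by omega : n ≠ 0)]
      have : Finset.Icc (n + 1) (0:ℤ) = {0} := by rw [h1]; rfl
      rw [this, Finset.sum_singleton, ← h1]
      ring
    · simp only [if_neg (by omega : ¬ (1:ℤ) ≤ n + 1), if_neg (by omega : n + 1 ≠ 0),
        if_neg (by omega : ¬ (1:ℤ) ≤ n), if_neg (by omega : n ≠ 0)]
      have : Finset.Icc (n + 1) (0:ℤ) = insert (n + 1) (Finset.Icc (n + 2) 0) := by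
        ext k; simp only [Finset.mem_Icc, Finset.mem_insert]; omega
      rw [this, Finset.sum_insert (by simp only [Finset.mem_Icc]; omega)]
      ring
  · subst h
    simp only [zero_add, if_pos (le_refl (1:ℤ)), if_neg (by norm_num : ¬ (1:ℤ) ≤ (0:ℤ)),
      if_pos rfl]
    rw [show Finset.Icc (1:ℤ) 1 = {1} from rfl, Finset.sum_singleton]
    simp
  · simp only [if_pos (by omega : (1:ℤ) ≤ n + 1), if_pos (by omega : (1:ℤ) ≤ n)]
    have e : Finset.Icc (1:ℤ) (n + 1) = insert (n + 1) (Finset.Icc 1 n) := by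
      ext k; simp only [Finset.mem_Icc, Finset.mem_insert]; omega
    rw [e, Finset.sum_insert (by simp only [Finset.mem_Icc]; omega)]
    ring

theorem stmt17 (N : ℕ) (hN : 0 < N) :
    ∀ n : ℤ,
      bsum (fun k =>
        Real.sin (Real.pi / (2 * N)) * |Real.sin ((2 * (k:ℝ) - 1) * Real.pi / (2 * N))|) n
      = (Int.fdiv n N : ℝ)
        + (1 / 2) * (1 - (-1 : ℝ) ^ (Int.fdiv n N) * Real.cos (n * Real.pi / N)) := by
  have main : ∀ n : ℤ, bsum (fun k =>
      Real.sin (Real.pi / (2 * N)) * |Real.sin ((2 * (k:ℝ) - 1) * Real.pi / (2 * N))|) n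
      = FF N n := by
    intro n
    induction n using Int.induction_on with
    | zero =>
      unfold bsum FF
      norm_num [Int.zero_fdiv]
    | succ k ih =>
      rw [bsum_succ, ih]
      have := key N hN (k + 1)
      simp only [add_sub_cancel_right] at this
      push_cast at this ⊢
      linarith
    | pred k ih =>
      have hb := bsum_succ (fun k =>
        Real.sin (Real.pi / (2 * N)) * |Real.sin ((2 * (k:ℝ) - 1) * Real.pi / (2 * N))|) (-k - 1)
      have hk := key N hN (-(k:ℤ))
      have e : (-(k:ℤ) - 1) = -k - 1 := by ring
      rw [e] at hk
      have e2 : (-(k:ℤ) - 1 + 1) = -k := by ring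
      rw [e2] at hb
      rw [ih] at hb
      push_cast at hb hk ⊢
      linarith
  intro n
  rw [main n]
  rfl
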